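/- The 3 × 3 × 3 array A defined by A(1,1,1)=1; A(i,j,1)=1/2 for i,j ∈ {2,3}; A(1,j,k)=1/2 for j,k ∈ {2,3}; A(i,1,k)=1/2 for i,k ∈ {2,3}; A(2,2,2)=A(3,3,2)=A(2,3,3)=A(3,2,3)=1/2; and all other entries 0, is a vertex of the polytope of 3 × 3 × 3 tristochastic arrays, and A is not a zero-one array. -/

import Mathlib

def IsVertex {V : Type*} [AddCommGroup V] [Module ℝ V] (P : Set V) (A : V) : Prop :=
  A ∈ P ∧ ∀ B ∈ P, ∀ C ∈ P, A = (1 / 2 : ℝ) • (B + C) → B = C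

def Tristochastic {n : ℕ} (A : Fin n → Fin n → Fin n → ℝ) : Prop :=
  (∀ i j k, 0 ≤ A i j k) ∧
  (∀ i j, ∑ k, A i j k = 1) ∧
  (∀ i k, ∑ j, A i j k = 1) ∧
  (∀ j k, ∑ i, A i j k = 1)

noncomputable def Aval : Fin 3 → Fin 3 → Fin 3 → ℝ := fun i j k =>
      ![![![(1 : ℝ), 0, 0], ![0, 1/2, 1/2], ![0, 1/2, 1/2]],
        ![![0, 1/2, 1/2], ![1/2, 1/2, 0], ![1/2, 0, 1/2]],
        ![![0, 1/2, 1/2], ![1/2, 0, 1/2], ![1/2, 1/2, 0]]] k i j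

set_option maxHeartbeats 2000000 in
lemma key (B : Fin 3 → Fin 3 → Fin 3 → ℝ) (hB : Tristochastic B)
    (h0 : ∀ i j k, Aval i j k = 0 → B i j k = 0) : B = Aval := by
  obtain ⟨-, ht, hr, hc⟩ := hB
  have ht' : ∀ i j, B i j 0 + B i j 1 + B i j 2 = 1 := by
    intro i j; have := ht i j; rwa [Fin.sum_univ_three] at this
  have hr' : ∀ i k, B i 0 k + B i 1 k + B i 2 k = 1 := by
    intro i k; have := hr i k; rwa [Fin.sum_univ_three] at this
  have hc' : ∀ j k, B 0 j k + B 1 j k + B 2 j k = 1 := by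
    intro j k; have := hc j k; rwa [Fin.sum_univ_three] at this
  have z1 : B 0 1 0 = 0 := h0 0 1 0 (by norm_num [Aval, Matrix.vecHead, Matrix.vecTail, Matrix.cons_val_two])
  have z2 : B 0 2 0 = 0 := h0 0 2 0 (by norm_num [Aval, Matrix.vecHead, Matrix.vecTail, Matrix.cons_val_two])
  have z3 : B 1 0 0 = 0 := h0 1 0 0 (by norm_num [Aval, Matrix.vecHead, Matrix.vecTail, Matrix.cons_val_two])
  have z4 : B 2 0 0 = 0 := h0 2 0 0 (by norm_num [Aval, Matrix.vecHead, Matrix.vecTail, Matrix.cons_val_two])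
  have z5 : B 0 0 1 = 0 := h0 0 0 1 (by norm_num [Aval, Matrix.vecHead, Matrix.vecTail, Matrix.cons_val_two])
  have z6 : B 1 2 1 = 0 := h0 1 2 1 (by norm_num [Aval, Matrix.vecHead, Matrix.vecTail, Matrix.cons_val_two])
  have z7 : B 2 1 1 = 0 := h0 2 1 1 (by norm_num [Aval, Matrix.vecHead, Matrix.vecTail, Matrix.cons_val_two])
  have z8 : B 0 0 2 = 0 := h0 0 0 2 (by norm_num [Aval, Matrix.vecHead, Matrix.vecTail, Matrix.cons_val_two])
  have z9 : B 1 1 2 = 0 := h0 1 1 2 (by norm_num [Aval, Matrix.vecHead, Matrix.vecTail, Matrix.cons_val_two])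
  have z10 : B 2 2 2 = 0 := h0 2 2 2 (by norm_num [Aval, Matrix.vecHead, Matrix.vecTail, Matrix.cons_val_two])
  have st00 := ht' 0 0
  have sr00 := hr' 0 0
  have sc00 := hc' 0 0
  have st01 := ht' 0 1
  have sr01 := hr' 0 1
  have sc01 := hc' 0 1
  have st02 := ht' 0 2
  have sr02 := hr' 0 2
  have sc02 := hc' 0 2
  have st10 := ht' 1 0
  have sr10 := hr' 1 0
  have sc10 := hc' 1 0
  have st11 := ht' 1 1
  have sr11 := hr' 1 1
  have sc11 := hc' 1 1
  have st12 := ht' 1 2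
  have sr12 := hr' 1 2
  have sc12 := hc' 1 2
  have st20 := ht' 2 0
  have sr20 := hr' 2 0
  have sc20 := hc' 2 0
  have st21 := ht' 2 1
  have sr21 := hr' 2 1
  have sc21 := hc' 2 1
  have st22 := ht' 2 2
  have sr22 := hr' 2 2
  have sc22 := hc' 2 2
  clear ht hr hc ht' hr' hc' h0
  have e000 : B 0 0 0 = 1 := by linarith
  have e001 : B 0 0 1 = 0 := by linarith
  have e002 : B 0 0 2 = 0 := by linarith
  have e010 : B 0 1 0 = 0 := by linarith
  have e011 : B 0 1 1 = 1/2 := by linarith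
  have e012 : B 0 1 2 = 1/2 := by linarith
  have e020 : B 0 2 0 = 0 := by linarith
  have e021 : B 0 2 1 = 1/2 := by linarith
  have e022 : B 0 2 2 = 1/2 := by linarith
  have e100 : B 1 0 0 = 0 := by linarith
  have e101 : B 1 0 1 = 1/2 := by linarith
  have e102 : B 1 0 2 = 1/2 := by linarith
  have e110 : B 1 1 0 = 1/2 := by linarith
  have e111 : B 1 1 1 = 1/2 := by linarith
  have e112 : B 1 1 2 = 0 := by linarith
  have e120 : B 1 2 0 = 1/2 := by linarith
  have e121 : B 1 2 1 = 0 := by linarith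
  have e122 : B 1 2 2 = 1/2 := by linarith
  have e200 : B 2 0 0 = 0 := by linarith
  have e201 : B 2 0 1 = 1/2 := by linarith
  have e202 : B 2 0 2 = 1/2 := by linarith
  have e210 : B 2 1 0 = 1/2 := by linarith
  have e211 : B 2 1 1 = 0 := by linarith
  have e212 : B 2 1 2 = 1/2 := by linarith
  have e220 : B 2 2 0 = 1/2 := by linarith
  have e221 : B 2 2 1 = 1/2 := by linarith
  have e222 : B 2 2 2 = 0 := by linarith
  funext i j k
  fin_cases i <;> fin_cases j <;> fin_cases k <;>
    first | exact e000 | exact e001 | exact e002 | exact e010 | exact e011 | exact e012 | exact e020 | exact e021 | exact e022 | exact e100 | exact e101 | exact e102 | exact e110 | exact e111 | exact e112 | exact e120 | exact e121 | exact e122 | exact e200 | exact e201 | exact e202 | exact e210 | exact e211 | exact e212 | exact e220 | exact e221 | exact e222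

/-- The explicit 3×3×3 array with layers
`A₁ = [[1,0,0],[0,½,½],[0,½,½]]`, `A₂ = [[0,½,½],[½,½,0],[½,0,½]]`,
`A₃ = [[0,½,½],[½,0,½],[½,½,0]]` (where `A i j k` is the `(i,j)` entry of layer `k`)
is a vertex of the polytope of tristochastic arrays, and is not a zero-one array. -/
theorem stmt2 :
    let A : Fin 3 → Fin 3 → Fin 3 → ℝ := fun i j k =>
      ![![![(1 : ℝ), 0, 0], ![0, 1/2, 1/2], ![0, 1/2, 1/2]],
        ![![0, 1/2, 1/2], ![1/2, 1/2, 0], ![1/2, 0, 1/2]],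
        ![![0, 1/2, 1/2], ![1/2, 0, 1/2], ![1/2, 1/2, 0]]] k i j
    IsVertex {B | Tristochastic B} A ∧ ¬ (∀ i j k, A i j k = 0 ∨ A i j k = 1) := by
  intro A
  show IsVertex {B | Tristochastic B} Aval ∧ ¬ (∀ i j k, Aval i j k = 0 ∨ Aval i j k = 1)
  constructor
  · constructor
    · refine ⟨?_, ?_, ?_, ?_⟩
      · intro i j k
        fin_cases i <;> fin_cases j <;> fin_cases k <;>
          norm_num [Aval, Matrix.vecHead, Matrix.vecTail, Matrix.cons_val_two]
      · intro i j
        rw [Fin.sum_univ_three]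
        fin_cases i <;> fin_cases j <;> norm_num [Aval, Matrix.vecHead, Matrix.vecTail, Matrix.cons_val_two]
      · intro i k
        rw [Fin.sum_univ_three]
        fin_cases i <;> fin_cases k <;> norm_num [Aval, Matrix.vecHead, Matrix.vecTail, Matrix.cons_val_two]
      · intro j k
        rw [Fin.sum_univ_three]
        fin_cases j <;> fin_cases k <;> norm_num [Aval, Matrix.vecHead, Matrix.vecTail, Matrix.cons_val_two]
    · intro B hB C hC hEq
      have hBC : ∀ i j k, B i j k + C i j k = 2 * Aval i j k := by
        intro i j k
        have h := congrFun (congrFun (congrFun hEq i) j) k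
        simp only [Pi.smul_apply, Pi.add_apply, smul_eq_mul] at h
        linarith
      have hB0 : ∀ i j k, Aval i j k = 0 → B i j k = 0 := by
        intro i j k h
        have h1 := hB.1 i j k
        have h2 := hC.1 i j k
        have h3 := hBC i j k
        rw [h] at h3; linarith
      have hC0 : ∀ i j k, Aval i j k = 0 → C i j k = 0 := by
        intro i j k h
        have h1 := hB.1 i j k
        have h2 := hC.1 i j k
        have h3 := hBC i j k
        rw [h] at h3; linarith
      rw [key B hB hB0, key C hC hC0]
  · intro h
    have := h 1 1 1
    norm_num [Aval, Matrix.vecHead, Matrix.vecTail, Matrix.cons_val_two] at this
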